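/- Let (R, m) be a Noetherian local ring and let I and J be proper ideals of R, each having finite Łojasiewicz exponent. Then I·J has finite Łojasiewicz exponent and 𝓛₀(I·J) ≤ 𝓛₀(I) + 𝓛₀(J). -/

import Mathlib

open Finset IsLocalRing

/-- The set of elements integral over an ideal `I`: `x` is integral over `I` if it satisfies
an equation `x ^ k + c 1 * x ^ (k-1) + ⋯ + c k = 0` with `c i ∈ I ^ i`. -/
def integralClosureIdeal {R : Type*} [CommRing R] (I : Ideal R) : Set R :=
  {x | ∃ k : ℕ, 1 ≤ k ∧ ∃ c : ℕ → R, (∀ i, 1 ≤ i → i ≤ k → c i ∈ I ^ i) ∧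
    x ^ k + ∑ i ∈ Finset.Icc 1 k, c i * x ^ (k - i) = 0}

/-- `Λ(I)`: the set of rationals `r/s` (as real numbers) with `r, s` positive integers such that
`m ^ r` is contained in the integral closure of `I ^ s`. -/
def Lambda (R : Type*) [CommRing R] [IsLocalRing R] (I : Ideal R) : Set ℝ :=
  {x | ∃ r s : ℕ, 0 < r ∧ 0 < s ∧
    ((maximalIdeal R ^ r : Ideal R) : Set R) ⊆ integralClosureIdeal (I ^ s) ∧
    x = (r : ℝ) / (s : ℝ)}

/-- The Łojasiewicz exponent `𝓛₀(I)`, the infimum of `Λ(I)`. -/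
noncomputable def Loj (R : Type*) [CommRing R] [IsLocalRing R] (I : Ideal R) : ℝ :=
  sInf (Lambda R I)

section Aux

variable {R : Type*} [CommRing R]
variable {R : Type*} [CommRing R]

lemma my_pow_mono {A B : Ideal R} (h : A ≤ B) (n : ℕ) : A ^ n ≤ B ^ n :=
  pow_le_pow_left' h n

lemma my_add_pow_le (A B : Ideal R) : ∀ n : ℕ, (A + B) ^ (n + 1) ≤ A * (A + B) ^ n + B ^ (n + 1) := by
  intro n
  induction n with
  | zero => simp [Ideal.mul_top]
  | succ n ih =>
    calc (A + B) ^ (n + 2) = (A + B) * (A + B) ^ (n + 1) := by ring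
      _ ≤ (A + B) * (A * (A + B) ^ n + B ^ (n + 1)) := Ideal.mul_mono_right ih
      _ = A * (A + B) ^ (n + 1) + (A * B ^ (n + 1) + B ^ (n + 2)) := by ring
      _ ≤ A * (A + B) ^ (n + 1) + (A * (A + B) ^ (n + 1) + B ^ (n + 2)) := by
          gcongr
          exact le_sup_right
      _ ≤ A * (A + B) ^ (n + 1) + B ^ (n + 2) := by
          rw [← add_assoc]
          gcongr ?_ + _
          exact sup_le le_rfl le_rfl

lemma span_mul_le_of_forall {S : Set R} {M K : Ideal R}
    (h : ∀ x ∈ S, Ideal.span {x} * M ≤ K) : Ideal.span S * M ≤ K := by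
  rw [Ideal.mul_le]
  intro r hr b hb
  induction hr using Submodule.span_induction with
  | mem x hx => exact h x hx (Ideal.mul_mem_mul (Ideal.mem_span_singleton_self x) hb)
  | zero => simpa using K.zero_mem
  | add x y _ _ hx hy => simpa [add_mul] using K.add_mem hx hy
  | smul c x _ hx => simpa [smul_eq_mul, mul_assoc] using K.mul_mem_left c hx

lemma closure_key {I : Ideal R} {x : R} (hx : x ∈ integralClosureIdeal I) :
    ∃ d : ℕ,
      Ideal.span {x} * (I + Ideal.span {x}) ^ d ≤ I * (I + Ideal.span {x}) ^ d ∧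
      ∀ n : ℕ, x ^ (n + d) ∈ I ^ n := by
  obtain ⟨k, hk, c, hc, heq⟩ := hx
  set T := I + Ideal.span {x} with hT
  obtain ⟨d, rfl⟩ : ∃ d, k = d + 1 := ⟨k - 1, by omega⟩
  have hxT : x ∈ T := by
    have : Ideal.span {x} ≤ T := le_sup_right
    exact this (Ideal.mem_span_singleton_self x)
  have hIT : I ≤ T := le_sup_left
  have hxk : x ^ (d + 1) ∈ I * T ^ d := by
    have hx1 : x ^ (d + 1) = -∑ i ∈ Finset.Icc 1 (d + 1), c i * x ^ (d + 1 - i) :=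
      eq_neg_of_add_eq_zero_left heq
    rw [hx1]
    refine neg_mem (Ideal.sum_mem _ fun i hi => ?_)
    obtain ⟨hi1, hik⟩ := Finset.mem_Icc.mp hi
    have h2 : (I : Ideal R) ^ i * Ideal.span {x ^ (d + 1 - i)} ≤ I * T ^ d := by
      obtain ⟨i', rfl⟩ : ∃ i', i = i' + 1 := ⟨i - 1, by omega⟩
      have hi'd : i' ≤ d := by omega
      rw [← Ideal.span_singleton_pow]
      calc I ^ (i' + 1) * Ideal.span {x} ^ (d + 1 - (i' + 1))
          = I * (I ^ i' * Ideal.span {x} ^ (d - i')) := by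
            rw [show d + 1 - (i' + 1) = d - i' by omega, pow_succ]
            ring
        _ ≤ I * (T ^ i' * T ^ (d - i')) :=
            Ideal.mul_mono_right (Ideal.mul_mono (pow_le_pow_left' hIT i')
              (pow_le_pow_left' le_sup_right (d - i')))
        _ = I * T ^ d := by
            rw [← pow_add, show i' + (d - i') = d by omega]
    exact h2 (Ideal.mul_mem_mul (hc i hi1 hik) (Ideal.mem_span_singleton_self _))
  have key1 : Ideal.span {x} * T ^ d ≤ I * T ^ d := by
    calc Ideal.span {x} * T ^ d ≤ T * T ^ d := Ideal.mul_mono_left le_sup_right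
      _ = T ^ (d + 1) := by rw [pow_succ]; ring
      _ ≤ I * T ^ d + Ideal.span {x} ^ (d + 1) := my_add_pow_le I (Ideal.span {x}) d
      _ ≤ I * T ^ d := by
          refine sup_le le_rfl ?_
          rw [Ideal.span_singleton_pow, Ideal.span_le]
          simpa using hxk
  refine ⟨d, key1, fun n => ?_⟩
  have Sn : ∀ n : ℕ, Ideal.span {x} ^ n * T ^ d ≤ I ^ n * T ^ d := by
    intro n
    induction n with
    | zero => simp
    | succ n ih =>
      calc Ideal.span {x} ^ (n + 1) * T ^ d
          = Ideal.span {x} ^ n * (Ideal.span {x} * T ^ d) := by ring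
        _ ≤ Ideal.span {x} ^ n * (I * T ^ d) := Ideal.mul_mono_right key1
        _ = I * (Ideal.span {x} ^ n * T ^ d) := by ring
        _ ≤ I * (I ^ n * T ^ d) := Ideal.mul_mono_right ih
        _ = I ^ (n + 1) * T ^ d := by rw [pow_succ]; ring
  have hmem : x ^ (n + d) ∈ Ideal.span {x} ^ n * T ^ d := by
    rw [pow_add]
    exact Ideal.mul_mem_mul (Ideal.pow_mem_pow (Ideal.mem_span_singleton_self x) n)
      (Ideal.pow_mem_pow hxT d)
  exact Ideal.mul_le_left (Sn n hmem)

lemma my_prod_mono {ι : Type*} {S : Finset ι} {f g : ι → Ideal R}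
    (h : ∀ x ∈ S, f x ≤ g x) : ∏ x ∈ S, f x ≤ ∏ x ∈ S, g x := by
  classical
  induction S using Finset.induction_on with
  | empty => simp
  | insert _ _ hx ih =>
    rw [Finset.prod_insert hx, Finset.prod_insert hx]
    exact Ideal.mul_mono (h _ (Finset.mem_insert_self _ _))
      (ih fun x hx => h x (Finset.mem_insert_of_mem hx))

lemma pow_transfer {A B M : Ideal R} (h : A * M ≤ B * M) :
    ∀ n : ℕ, A ^ n * M ≤ B ^ n * M := by
  intro n
  induction n with
  | zero => simp
  | succ n ih =>
    calc A ^ (n + 1) * M = A ^ n * (A * M) := by rw [pow_succ]; ring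
      _ ≤ A ^ n * (B * M) := Ideal.mul_mono_right h
      _ = B * (A ^ n * M) := by ring
      _ ≤ B * (B ^ n * M) := Ideal.mul_mono_right ih
      _ = B ^ (n + 1) * M := by rw [pow_succ]; ring

lemma uniform [IsNoetherianRing R] {A K : Ideal R}
    (h : (A : Set R) ⊆ integralClosureIdeal K) :
    ∃ (M : Ideal R) (D : ℕ), A * M ≤ K * M ∧ K ^ D ≤ M := by
  classical
  obtain ⟨S, hS⟩ := IsNoetherian.noetherian A
  have hch : ∀ x ∈ S, ∃ d : ℕ,
      Ideal.span {x} * (K + Ideal.span {x}) ^ d ≤ K * (K + Ideal.span {x}) ^ d := by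
    intro x hx
    have hxA : x ∈ A := by
      rw [← hS]
      exact Ideal.subset_span hx
    obtain ⟨d, hd, _⟩ := closure_key (h hxA)
    exact ⟨d, hd⟩
  choose! d hd using hch
  refine ⟨∏ x ∈ S, (K + Ideal.span {x}) ^ (d x), ∑ x ∈ S, d x, ?_, ?_⟩
  · rw [← hS]
    refine span_mul_le_of_forall fun x hx => ?_
    have hM : ∏ y ∈ S, (K + Ideal.span {y}) ^ (d y)
        = (K + Ideal.span {x}) ^ (d x) * ∏ y ∈ S.erase x, (K + Ideal.span {y}) ^ (d y) :=
      (Finset.mul_prod_erase S _ hx).symm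
    rw [hM]
    calc Ideal.span {x} * ((K + Ideal.span {x}) ^ (d x) * ∏ y ∈ S.erase x, (K + Ideal.span {y}) ^ (d y))
        = (Ideal.span {x} * (K + Ideal.span {x}) ^ (d x)) * ∏ y ∈ S.erase x, (K + Ideal.span {y}) ^ (d y) := by
          ring
      _ ≤ (K * (K + Ideal.span {x}) ^ (d x)) * ∏ y ∈ S.erase x, (K + Ideal.span {y}) ^ (d y) :=
          Ideal.mul_mono_left (hd x hx)
      _ = K * ((K + Ideal.span {x}) ^ (d x) * ∏ y ∈ S.erase x, (K + Ideal.span {y}) ^ (d y)) := by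
          ring
  · rw [← Finset.prod_pow_eq_pow_sum]
    exact my_prod_mono fun x _ => pow_le_pow_left' le_sup_left (d x)

/-- Backward: module criterion implies integral over the ideal. -/
lemma mem_closure_of_module [IsNoetherianRing R] {L P : Ideal R} {z : R} {m : ℕ}
    (hm : 1 ≤ m) (hzm : z ^ m ∈ P)
    (hmul : Ideal.span {z} * P ≤ L * P) :
    z ∈ integralClosureIdeal L := by
  have hfin : Module.Finite R P := Module.Finite.iff_fg.mpr (IsNoetherian.noetherian P)
  -- endomorphism: multiplication by z
  set f : Module.End R P := z • (LinearMap.id : P →ₗ[R] P) with hf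
  have hrange : LinearMap.range f ≤ L • (⊤ : Submodule R P) := by
    rintro w ⟨v, rfl⟩
    rw [Submodule.mem_smul_top_iff]
    have : (f v : R) ∈ Ideal.span {z} * P := by
      have : (f v : R) = z * (v : R) := rfl
      rw [this]
      exact Ideal.mul_mem_mul (Ideal.mem_span_singleton_self z) v.2
    simpa [Ideal.smul_eq_mul] using hmul this
  obtain ⟨p, hp, _, hcoeff, heval⟩ :=
    LinearMap.exists_monic_and_coeff_mem_pow_and_aeval_eq_zero_of_range_le_smul R f L hrange
  -- evaluate at z^m
  have hkey : ∀ q : Polynomial R, ((Polynomial.aeval f q) ⟨z ^ m, hzm⟩ : R)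
      = q.eval z * z ^ m := by
    intro q
    induction q using Polynomial.induction_on' with
    | add a b ha hb => simp [ha, hb, add_mul]
    | monomial i a =>
      have hpow : ∀ (i : ℕ) (w : P), ((f ^ i) w : R) = z ^ i * (w : R) := by
        intro i
        induction i with
        | zero => intro w; simp
        | succ n ih =>
          intro w
          have : (f ^ (n+1)) w = f ((f ^ n) w) := by
            rw [pow_succ']
            rfl
          rw [this]
          have h2 : (f ((f ^ n) w) : R) = z * ((f ^ n) w : R) := rfl
          rw [h2, ih, pow_succ]
          ring
      simp [Polynomial.aeval_monomial, Polynomial.eval_monomial, hpow, mul_assoc]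
  have h0 : p.eval z * z ^ m = 0 := by
    rw [← hkey p, heval]
    simp
  -- build the integral equation
  set n := p.natDegree with hn
  refine ⟨n + m, le_add_of_nonneg_of_le (Nat.zero_le n) hm,
    fun j => if j ≤ n then p.coeff (n - j) else 0, ?_, ?_⟩
  · intro i hi1 hik
    by_cases h : i ≤ n
    · simp only [if_pos h]
      have := hcoeff (n - i)
      rwa [Nat.sub_sub_self h] at this
    · simp only [if_neg h]
      exact zero_mem _
  · have hsplit : ∑ j ∈ Finset.Icc 1 (n + m), (if j ≤ n then p.coeff (n - j) else 0) * z ^ (n + m - j)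
        = ∑ j ∈ Finset.Icc 1 n, p.coeff (n - j) * z ^ (n + m - j) := by
      rw [← Finset.sum_subset (Finset.Icc_subset_Icc_right (Nat.le_add_right n m))]
      · exact Finset.sum_congr rfl fun j hj => by
          rw [if_pos (Finset.mem_Icc.mp hj).2]
      · intro j hj hj'
        have : ¬ j ≤ n := by
          simp only [Finset.mem_Icc] at hj hj'
          omega
        rw [if_neg this, zero_mul]
    rw [hsplit]
    have hre : ∑ j ∈ Finset.Icc 1 n, p.coeff (n - j) * z ^ (n + m - j)
        = ∑ i ∈ Finset.range n, p.coeff i * z ^ (i + m) := by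
      refine Finset.sum_nbij' (fun j => n - j) (fun i => n - i) ?_ ?_ ?_ ?_ ?_
      · intro j hj
        simp only [Finset.mem_Icc] at hj
        simp only [Finset.mem_range]
        omega
      · intro i hi
        simp only [Finset.mem_range] at hi
        simp only [Finset.mem_Icc]
        omega
      · intro j hj
        simp only [Finset.mem_Icc] at hj
        show n - (n - j) = j
        omega
      · intro i hi
        simp only [Finset.mem_range] at hi
        show n - (n - i) = i
        omega
      · intro j hj
        simp only [Finset.mem_Icc] at hj
        show p.coeff (n - j) * z ^ (n + m - j) = p.coeff (n - j) * z ^ ((n - j) + m)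
        rw [show n + m - j = (n - j) + m by omega]
    rw [hre]
    have hmonic : p.coeff n = 1 := hp.coeff_natDegree
    calc z ^ (n + m) + ∑ i ∈ Finset.range n, p.coeff i * z ^ (i + m)
        = ∑ i ∈ Finset.range (n + 1), p.coeff i * z ^ (i + m) := by
          rw [Finset.sum_range_succ, hmonic, one_mul]; ring
      _ = (∑ i ∈ Finset.range (n + 1), p.coeff i * z ^ i) * z ^ m := by
          rw [Finset.sum_mul]
          exact Finset.sum_congr rfl fun i _ => by rw [pow_add]; ring
      _ = p.eval z * z ^ m := by rw [Polynomial.eval_eq_sum_range]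
      _ = 0 := h0

open IsLocalRing in
lemma lambda_combine [IsNoetherianRing R] [IsLocalRing R] {I J : Ideal R} {r s r' s' : ℕ}
    (hs : 0 < s) (hs' : 0 < s')
    (hI : ((maximalIdeal R ^ r : Ideal R) : Set R) ⊆ integralClosureIdeal (I ^ s))
    (hJ : ((maximalIdeal R ^ r' : Ideal R) : Set R) ⊆ integralClosureIdeal (J ^ s')) :
    ((maximalIdeal R ^ (r * s' + r' * s) : Ideal R) : Set R)
      ⊆ integralClosureIdeal ((I * J) ^ (s * s')) := by
  intro z hz
  obtain ⟨M, D1, hM1, hM2⟩ := uniform hI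
  obtain ⟨N, D2, hN1, hN2⟩ := uniform hJ
  set mm := maximalIdeal R with hmm
  -- multiplication property
  have hmul : Ideal.span {z} * (M * N) ≤ (I * J) ^ (s * s') * (M * N) := by
    have hz' : Ideal.span {z} ≤ mm ^ (r * s' + r' * s) :=
      (Ideal.span_singleton_le_iff_mem _).mpr hz
    calc Ideal.span {z} * (M * N) ≤ mm ^ (r * s' + r' * s) * (M * N) :=
          Ideal.mul_mono_left hz'
      _ = ((mm ^ r) ^ s' * M) * ((mm ^ r') ^ s * N) := by
          rw [pow_add, pow_mul, pow_mul]
          ring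
      _ ≤ ((I ^ s) ^ s' * M) * ((J ^ s') ^ s * N) :=
          Ideal.mul_mono (pow_transfer hM1 s') (pow_transfer hN1 s)
      _ = (I * J) ^ (s * s') * (M * N) := by
          rw [← pow_mul, ← pow_mul, mul_pow, Nat.mul_comm s' s]
          ring
  -- z is in both closures
  have hzr : z ∈ mm ^ r :=
    Ideal.pow_le_pow_right (by nlinarith : r ≤ r * s' + r' * s) hz
  have hzr' : z ∈ mm ^ r' :=
    Ideal.pow_le_pow_right (by nlinarith : r' ≤ r * s' + r' * s) hz
  obtain ⟨d1, _, hd1⟩ := closure_key (hI hzr)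
  obtain ⟨d2, _, hd2⟩ := closure_key (hJ hzr')
  -- power membership
  have hpow : z ^ ((D1 + d1) + (D2 + d2) + 1) ∈ M * N := by
    have h1 : z ^ (D1 + d1) ∈ M := hM2 (hd1 D1)
    have h2 : z ^ (D2 + d2) ∈ N := hN2 (hd2 D2)
    have : z ^ ((D1 + d1) + (D2 + d2) + 1) = z * (z ^ (D1 + d1) * z ^ (D2 + d2)) := by
      rw [← pow_add]
      ring
    rw [this]
    exact Ideal.mul_mem_left _ z (Ideal.mul_mem_mul h1 h2)
  exact mem_closure_of_module (Nat.succ_le_succ (Nat.zero_le _)) hpow hmul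

end Aux

theorem loj_mul_le_add
    {R : Type*} [CommRing R] [IsNoetherianRing R] [IsLocalRing R]
    (I J : Ideal R) (hI : I ≠ ⊤) (hJ : J ≠ ⊤)
    (hIfin : (Lambda R I).Nonempty) (hJfin : (Lambda R J).Nonempty) :
    (Lambda R (I * J)).Nonempty ∧ Loj R (I * J) ≤ Loj R I + Loj R J := by
  have hmain : ∀ u ∈ Lambda R I, ∀ v ∈ Lambda R J, u + v ∈ Lambda R (I * J) := by
    rintro u ⟨r, s, hr, hs, hIsub, rfl⟩ v ⟨r', s', hr', hs', hJsub, rfl⟩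
    refine ⟨r * s' + r' * s, s * s', by positivity, by positivity,
      lambda_combine hs hs' hIsub hJsub, ?_⟩
    have hs0 : (s : ℝ) ≠ 0 := Nat.cast_ne_zero.mpr hs.ne'
    have hs'0 : (s' : ℝ) ≠ 0 := Nat.cast_ne_zero.mpr hs'.ne'
    field_simp
    push_cast
    ring
  obtain ⟨u, hu⟩ := hIfin
  obtain ⟨v, hv⟩ := hJfin
  have hne : (Lambda R (I * J)).Nonempty := ⟨u + v, hmain u hu v hv⟩
  refine ⟨hne, ?_⟩
  have hbdd : BddBelow (Lambda R (I * J)) := by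
    refine ⟨0, ?_⟩
    rintro x ⟨r, s, hr, hs, -, rfl⟩
    positivity
  have key : ∀ u ∈ Lambda R I, ∀ v ∈ Lambda R J, Loj R (I * J) ≤ u + v :=
    fun u hu v hv => csInf_le hbdd (hmain u hu v hv)
  have step1 : ∀ v ∈ Lambda R J, Loj R (I * J) - v ≤ Loj R I := by
    intro v hv
    refine le_csInf ⟨u, hu⟩ fun w hw => ?_
    linarith [key w hw v hv]
  have step2 : Loj R (I * J) - Loj R I ≤ Loj R J := by
    refine le_csInf ⟨v, hv⟩ fun w hw => ?_
    linarith [step1 w hw]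
  linarith
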